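/- Let γ > 0 and 0 < a < 1. Define S(u,v) = ∫_u^v e^{-1/z}·z/(1−z) dz, R(a,y) = (1/γ)·( log(y/(1−y)) − 2y − log(a/(1−a)) + 2a ), K(z) = (1/γ)·e^{1/z}·(2 − 2/z + 1/z²) (so K(1) = e/γ), and T(y) = R(a,y) − S(a,y)·(e/γ) for y ∈ [a,1). Then T(a) = 0 and for every y ∈ (a,1), T is twice differentiable at y with −γ y·T'(y) + γ y³(1−y)·T''(y) = −1. -/

import Mathlib

/-- Heterodyne scale density Q(z) = e^{-1/z}·z/(1−z). -/
noncomputable def Qhet (z : ℝ) : ℝ := Real.exp (-1 / z) * z / (1 - z)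

/-- Heterodyne scale integral S(u,v) = ∫_u^v Q(z) dz. -/
noncomputable def Shet (u v : ℝ) : ℝ := ∫ z in u..v, Qhet z

/-- Heterodyne R(u,v) = (1/γ)[log(z/(1−z)) − 2z]_u^v. -/
noncomputable def Rhet (γ u v : ℝ) : ℝ :=
  (1 / γ) * (Real.log (v / (1 - v)) - 2 * v - Real.log (u / (1 - u)) + 2 * u)

lemma Qhet_contOn : ContinuousOn Qhet (Set.Ioo (0:ℝ) 1) := by
  apply ContinuousOn.div
  · exact ((Real.continuous_exp.comp_continuousOn
      (continuousOn_const.div continuousOn_id fun z hz => ne_of_gt hz.1))).mul continuousOn_id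
  · exact continuousOn_const.sub continuousOn_id
  · exact fun z hz => sub_ne_zero.mpr hz.2.ne'

/-- The mean first hitting time of the level a under heterodyne detection,
T(y) = R(a,y) − S(a,y)·(e/γ) (note K(1) = e/γ), satisfies T(a) = 0 and solves
−γy T'(y) + γy³(1−y) T''(y) = −1 on (a,1). -/
theorem het_mean_hitting_time (γ a : ℝ) (hγ : 0 < γ) (ha0 : 0 < a)
    (ha1 : a < 1) :
    let T : ℝ → ℝ := fun y => Rhet γ a y - Shet a y * (Real.exp 1 / γ)
    T a = 0 ∧
    ∀ y ∈ Set.Ioo a 1, ∃ t' t'' : ℝ,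
      HasDerivAt T t' y ∧ HasDerivAt (deriv T) t'' y ∧
      -γ * y * t' + γ * y ^ 3 * (1 - y) * t'' = -1 := by
  intro T
  constructor
  · simp [T, Rhet, Shet, intervalIntegral.integral_same]
  · -- derivative function
    set t1 : ℝ → ℝ := fun y =>
      (1 / γ) * (1 / (y * (1 - y)) - 2) - Qhet y * (Real.exp 1 / γ) with ht1def
    have hγ0 : γ ≠ 0 := hγ.ne'
    have hT1 : ∀ y ∈ Set.Ioo a 1, HasDerivAt T (t1 y) y := by
      intro y hy
      have hy0 : (0:ℝ) < y := ha0.trans hy.1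
      have hy1 : y < 1 := hy.2
      have hyne : y ≠ 0 := hy0.ne'
      have h1y : (1:ℝ) - y ≠ 0 := sub_ne_zero.mpr hy1.ne'
      have hyIoo : y ∈ Set.Ioo (0:ℝ) 1 := ⟨hy0, hy1⟩
      -- deriv of R part
      have hq : HasDerivAt (fun v : ℝ => v / (1 - v))
          ((1 * (1 - y) - y * (0 - 1)) / (1 - y) ^ 2) y :=
        (hasDerivAt_id y).div ((hasDerivAt_const y 1).sub (hasDerivAt_id y)) h1y
      have hratne : y / (1 - y) ≠ 0 := div_ne_zero hyne h1y
      have hlog := hq.log hratne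
      have hR : HasDerivAt (fun v => Rhet γ a v)
          ((1/γ) * ((1 * (1 - y) - y * (0 - 1)) / (1 - y) ^ 2 / (y / (1 - y)) - 2 * 1 - 0 + 0)) y := by
        unfold Rhet
        exact (((hlog.sub ((hasDerivAt_id y).const_mul 2)).sub
          (hasDerivAt_const y _)).add (hasDerivAt_const y _)).const_mul (1/γ)
      -- deriv of S part
      have hsub : Set.uIcc a y ⊆ Set.Ioo (0:ℝ) 1 := by
        rw [Set.uIcc_of_le hy.1.le]
        exact fun z hz => ⟨ha0.trans_le hz.1, lt_of_le_of_lt hz.2 hy1⟩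
      have hint : IntervalIntegrable Qhet MeasureTheory.volume a y :=
        (Qhet_contOn.mono hsub).intervalIntegrable
      have hmeas : StronglyMeasurableAtFilter Qhet (nhds y) :=
        Qhet_contOn.stronglyMeasurableAtFilter isOpen_Ioo y hyIoo
      have hS : HasDerivAt (fun v => Shet a v) (Qhet y) y :=
        intervalIntegral.integral_hasDerivAt_right hint hmeas (Qhet_contOn.continuousAt
          (isOpen_Ioo.mem_nhds hyIoo))
      have := hR.sub (hS.mul_const (Real.exp 1 / γ))
      refine this.congr_deriv ?_
      simp only [ht1def]
      field_simp
      ring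
    intro y hy
    have hy0 : (0:ℝ) < y := ha0.trans hy.1
    have hy1 : y < 1 := hy.2
    have hyne : y ≠ 0 := hy0.ne'
    have h1y : (1:ℝ) - y ≠ 0 := sub_ne_zero.mpr hy1.ne'
    -- second derivative: derivative of t1
    have hinv : HasDerivAt (fun v : ℝ => 1 / (v * (1 - v)))
        ((0 * (y * (1 - y)) - 1 * (1 * (1 - y) + y * (0 - 1))) / (y * (1 - y)) ^ 2) y :=
      (hasDerivAt_const y 1).div
        ((hasDerivAt_id y).mul ((hasDerivAt_const y 1).sub (hasDerivAt_id y)))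
        (mul_ne_zero hyne h1y)
    have hexp : HasDerivAt (fun v : ℝ => Real.exp (-1 / v))
        (Real.exp (-1 / y) * ((0 * y - (-1) * 1) / y ^ 2)) y :=
      HasDerivAt.exp ((hasDerivAt_const y (-1)).div (hasDerivAt_id y) hyne)
    have hQ : HasDerivAt Qhet
        (((Real.exp (-1 / y) * ((0 * y - (-1) * 1) / y ^ 2) * y + Real.exp (-1 / y) * 1) * (1 - y)
          - Real.exp (-1 / y) * y * (0 - 1)) / (1 - y) ^ 2) y := by
      unfold Qhet
      exact (hexp.mul (hasDerivAt_id y)).div ((hasDerivAt_const y 1).sub (hasDerivAt_id y)) h1y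
    have ht2 : HasDerivAt t1
        ((0 * (y * (1 - y)) - 1 * (1 * (1 - y) + y * (0 - 1))) / (y * (1 - y)) ^ 2 * (1/γ) -
          (((Real.exp (-1 / y) * ((0 * y - (-1) * 1) / y ^ 2) * y + Real.exp (-1 / y) * 1) * (1 - y)
          - Real.exp (-1 / y) * y * (0 - 1)) / (1 - y) ^ 2) * (Real.exp 1 / γ)) y := by
      have h1 : HasDerivAt (fun v : ℝ => (1 / γ) * (1 / (v * (1 - v)) - 2))
          ((0 * (y * (1 - y)) - 1 * (1 * (1 - y) + y * (0 - 1))) / (y * (1 - y)) ^ 2 * (1/γ)) y := by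
        have := (hinv.sub (hasDerivAt_const y 2)).const_mul (1/γ)
        refine this.congr_deriv ?_
        ring
      exact h1.sub (hQ.mul_const (Real.exp 1 / γ))
    have heq : deriv T =ᶠ[nhds y] t1 :=
      Filter.eventuallyEq_of_mem (isOpen_Ioo.mem_nhds hy) fun z hz => (hT1 z hz).deriv
    refine ⟨t1 y, _, hT1 y hy, ht2.congr_of_eventuallyEq heq, ?_⟩
    simp only [ht1def, Qhet]
    have hE : Real.exp (-1/y) * Real.exp 1 = Real.exp (-1/y + 1) := (Real.exp_add _ _).symm
    field_simp
    ring
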